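/- Let h_b^{(1)}(κ, d) = (⌈d/2⌉/d)·max(h_b(⌈κd/2⌉/⌈d/2⌉), h_b(⌊κd/2⌋/⌈d/2⌉)) for κ ∈ [0,1] with κd an integer. Then h_b^{(1)}(κ, d) ≤ log(2)·(1/2 + 1/d), and therefore for d ≥ 12 and ε ∈ (0,1), ε^{1−κ}·exp(h_b(κ) + h_b^{(1)}(κ,d)) ≤ 3·ε^{1−κ}. -/

import Mathlib

/-- Binary entropy in nats, with the convention `h_b 0 = h_b 1 = 0`. -/
noncomputable def binEnt (x : ℝ) : ℝ := -(x * Real.log x) - (1 - x) * Real.log (1 - x)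

lemma binEnt_eq (x : ℝ) : binEnt x = Real.binEntropy x := by
  unfold binEnt Real.binEntropy
  rw [Real.log_inv, Real.log_inv]; ring

lemma binEnt_le_log_two (x : ℝ) : binEnt x ≤ Real.log 2 := by
  rw [binEnt_eq]; exact Real.binEntropy_le_log_two

theorem hb1_bound (d : ℕ) (hd : 1 ≤ d) (κ : ℝ) (hκ : κ ∈ Set.Icc (0 : ℝ) 1)
    (hint : ∃ m : ℕ, (m : ℝ) = κ * d)
    (hb1 : ℝ)
    (hhb1 : hb1 = ((⌈(d : ℝ) / 2⌉ : ℝ) / d) *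
      max (binEnt ((⌈κ * d / 2⌉ : ℝ) / (⌈(d : ℝ) / 2⌉ : ℝ)))
          (binEnt ((⌊κ * d / 2⌋ : ℝ) / (⌈(d : ℝ) / 2⌉ : ℝ)))) :
    hb1 ≤ Real.log 2 * (1 / 2 + 1 / d) ∧
    (12 ≤ d → ∀ ε : ℝ, ε ∈ Set.Ioo (0 : ℝ) 1 →
      ε ^ (1 - κ) * Real.exp (binEnt κ + hb1) ≤ 3 * ε ^ (1 - κ)) := by
  have hd0 : (0 : ℝ) < d := by exact_mod_cast hd
  have hc0 : (0 : ℝ) ≤ (⌈(d : ℝ) / 2⌉ : ℝ) := by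
    have : (0 : ℤ) ≤ ⌈(d : ℝ) / 2⌉ := Int.ceil_nonneg (by positivity)
    exact_mod_cast this
  have hmax : max (binEnt ((⌈κ * d / 2⌉ : ℝ) / (⌈(d : ℝ) / 2⌉ : ℝ)))
      (binEnt ((⌊κ * d / 2⌋ : ℝ) / (⌈(d : ℝ) / 2⌉ : ℝ))) ≤ Real.log 2 :=
    max_le (binEnt_le_log_two _) (binEnt_le_log_two _)
  have hratio : (⌈(d : ℝ) / 2⌉ : ℝ) / d ≤ 1 / 2 + 1 / d := by
    rw [div_le_iff₀ hd0]
    have h : (⌈(d : ℝ) / 2⌉ : ℝ) < (d : ℝ) / 2 + 1 := Int.ceil_lt_add_one _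
    have h2 : (1 / 2 + 1 / (d:ℝ)) * d = d / 2 + 1 := by field_simp
    linarith
  have hlog2 : (0 : ℝ) ≤ Real.log 2 := Real.log_nonneg (by norm_num)
  have h1 : hb1 ≤ Real.log 2 * (1 / 2 + 1 / d) := by
    rw [hhb1]
    calc (⌈(d : ℝ) / 2⌉ : ℝ) / d * _ ≤ (⌈(d : ℝ) / 2⌉ : ℝ) / d * Real.log 2 :=
          mul_le_mul_of_nonneg_left hmax (by positivity)
      _ ≤ (1 / 2 + 1 / d) * Real.log 2 := mul_le_mul_of_nonneg_right hratio hlog2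
      _ = Real.log 2 * (1 / 2 + 1 / d) := mul_comm _ _
  refine ⟨h1, fun hd12 ε hε => ?_⟩
  have hεpos : (0 : ℝ) < ε ^ (1 - κ) := Real.rpow_pos_of_pos hε.1 _
  rw [mul_comm (3 : ℝ)]
  apply mul_le_mul_of_nonneg_left _ hεpos.le
  have hsum : binEnt κ + hb1 ≤ Real.log 2 * (19 / 12) := by
    have h2 : (1 : ℝ) / d ≤ 1 / 12 := by
      apply one_div_le_one_div_of_le (by norm_num)
      exact_mod_cast hd12
    have := binEnt_le_log_two κ
    nlinarith
  calc Real.exp (binEnt κ + hb1) ≤ Real.exp (Real.log 2 * (19 / 12)) := Real.exp_le_exp.2 hsum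
    _ = (2 : ℝ) ^ ((19 : ℝ) / 12) := by
        rw [Real.rpow_def_of_pos (by norm_num : (0:ℝ) < 2), mul_comm]
    _ ≤ 3 := by
        have h12 : ((2 : ℝ) ^ ((19 : ℝ) / 12)) ^ (12 : ℕ) ≤ (3 : ℝ) ^ (12 : ℕ) := by
          rw [← Real.rpow_natCast ((2 : ℝ) ^ ((19 : ℝ) / 12)), ← Real.rpow_mul (by norm_num)]
          norm_num
        exact le_of_pow_le_pow_left₀ (by norm_num) (by norm_num) h12
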